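/- Let G be a group and let C be a free G-category over a commutative ring k. Let α and β be G-orbits of objects of C, and choose representatives x_α ∈ α and x_β ∈ β. Then the morphism k-module Hom_{C/G}(α,β) of the quotient category is canonically isomorphic, as a k-module, to the direct sum ⊕_{s∈G} Hom_C(s·x_α, x_β); the isomorphism sends the class of a morphism f : x → y (x ∈ α, y ∈ β) to s·f, where s is the unique group element with s·y = x_β. -/
import Mathlib


/-! Basic notion of a (small) category over a commutative ring `k`:
objects form a type, morphism sets are `k`-modules and composition is `k`-bilinear. -/

structure kCat (k : Type) [CommRing k] where
  Obj : Type
  Hom : Obj → Obj → Type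
  [homAdd : ∀ x y, AddCommGroup (Hom x y)]
  [homMod : ∀ x y, Module k (Hom x y)]
  id : ∀ x, Hom x x
  comp : ∀ {x y z}, Hom y z → Hom x y → Hom x z
  id_comp : ∀ {x y} (f : Hom x y), comp (id y) f = f
  comp_id : ∀ {x y} (f : Hom x y), comp f (id x) = f
  assoc : ∀ {w x y z} (h : Hom y z) (g : Hom x y) (f : Hom w x),
    comp (comp h g) f = comp h (comp g f)
  comp_add_left : ∀ {x y z} (g g' : Hom y z) (f : Hom x y),
    comp (g + g') f = comp g f + comp g' f
  comp_add_right : ∀ {x y z} (g : Hom y z) (f f' : Hom x y),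
    comp g (f + f') = comp g f + comp g f'
  comp_smul_left : ∀ {x y z} (a : k) (g : Hom y z) (f : Hom x y),
    comp (a • g) f = a • comp g f
  comp_smul_right : ∀ {x y z} (a : k) (g : Hom y z) (f : Hom x y),
    comp g (a • f) = a • comp g f

attribute [instance] kCat.homAdd kCat.homMod

/-- Transport of a morphism along equalities of its source and target. -/
def kCat.trans2 {k : Type} [CommRing k] (C : kCat k) {x x' y y' : C.Obj}
    (hx : x = x') (hy : y = y') (f : C.Hom x y) : C.Hom x' y' :=
  cast (by rw [hx, hy]) f

/-- A `k`-linear functor between categories over `k`. -/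
structure kFunctor (k : Type) [CommRing k] (C D : kCat k) where
  obj : C.Obj → D.Obj
  map : ∀ x y, C.Hom x y →ₗ[k] D.Hom (obj x) (obj y)
  map_id : ∀ x, map x x (C.id x) = D.id (obj x)
  map_comp : ∀ {x y z} (g : C.Hom y z) (f : C.Hom x y),
    map x z (C.comp g f) = D.comp (map y z g) (map x y f)

/-- The identity functor. -/
def kFunctor.idF (k : Type) [CommRing k] (C : kCat k) : kFunctor k C C where
  obj := fun x => x
  map := fun _ _ => LinearMap.id
  map_id := fun _ => rfl
  map_comp := fun _ _ => rfl

/-- Composition of `k`-linear functors. -/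
def kFunctor.compF {k : Type} [CommRing k] {C D E : kCat k}
    (F : kFunctor k D E) (H : kFunctor k C D) : kFunctor k C E where
  obj := fun x => F.obj (H.obj x)
  map := fun x y => (F.map _ _).comp (H.map x y)
  map_id := fun x => by simp [H.map_id, F.map_id]
  map_comp := fun g f => by simp [H.map_comp, F.map_comp]

/-- A natural transformation between `k`-linear functors. -/
structure kNatTrans {k : Type} [CommRing k] {C D : kCat k} (F G : kFunctor k C D) where
  app : ∀ x, D.Hom (F.obj x) (G.obj x)
  naturality : ∀ {x y} (f : C.Hom x y),
    D.comp (app y) (F.map x y f) = D.comp (G.map x y f) (app x)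

/-- A natural isomorphism between `k`-linear functors, given by a pair of mutually
inverse natural transformations. -/
structure kNatIso {k : Type} [CommRing k] {C D : kCat k} (F G : kFunctor k C D) where
  hom : kNatTrans F G
  inv : kNatTrans G F
  hom_inv : ∀ x, D.comp (inv.app x) (hom.app x) = D.id (F.obj x)
  inv_hom : ∀ x, D.comp (hom.app x) (inv.app x) = D.id (G.obj x)

/-- An equivalence of categories over `k`. -/
structure kEquivalence (k : Type) [CommRing k] (C D : kCat k) where
  F : kFunctor k C D
  G : kFunctor k D C
  unitIso : kNatIso (kFunctor.idF k C) (kFunctor.compF G F)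
  counitIso : kNatIso (kFunctor.compF F G) (kFunctor.idF k D)

/-- An isomorphism of categories over `k`: a `k`-linear functor which is bijective on
objects and bijective (hence a `k`-module isomorphism) on each morphism module. -/
structure kCatIso (k : Type) [CommRing k] (C D : kCat k) where
  F : kFunctor k C D
  objBij : Function.Bijective F.obj
  homBij : ∀ x y, Function.Bijective (F.map x y)

/-- The full subcategory on the objects satisfying a predicate `P`. -/
def kCat.fullSub {k : Type} [CommRing k] (C : kCat k) (P : C.Obj → Prop) : kCat k where
  Obj := { x : C.Obj // P x }
  Hom := fun x y => C.Hom x.1 y.1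
  homAdd := fun _ _ => inferInstance
  homMod := fun _ _ => inferInstance
  id := fun x => C.id x.1
  comp := fun g f => C.comp g f
  id_comp := fun f => C.id_comp f
  comp_id := fun f => C.comp_id f
  assoc := fun h g f => C.assoc h g f
  comp_add_left := fun g g' f => C.comp_add_left g g' f
  comp_add_right := fun g f f' => C.comp_add_right g f f'
  comp_smul_left := fun a g f => C.comp_smul_left a g f
  comp_smul_right := fun a g f => C.comp_smul_right a g f

/-- The inclusion functor of a full subcategory. -/
def kCat.inclFunctor {k : Type} [CommRing k] (C : kCat k) (P : C.Obj → Prop) :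
    kFunctor k (C.fullSub P) C where
  obj := fun x => x.1
  map := fun _ _ => LinearMap.id
  map_id := fun _ => rfl
  map_comp := fun _ _ => rfl

/-! Direct sum helpers. -/

open DirectSum

/-- The element of a direct sum concentrated in one component. -/
noncomputable def dsSingle {ι : Type} {M : ι → Type} [∀ i, AddCommGroup (M i)]
    (i : ι) (m : M i) : ⨁ i, M i :=
  letI := Classical.decEq ι
  DFinsupp.single i m

/-- The linear inclusion of one component into a direct sum. -/
noncomputable def dsLof (k : Type) [CommRing k] {ι : Type} (M : ι → Type)
    [∀ i, AddCommGroup (M i)] [∀ i, Module k (M i)] (i : ι) : M i →ₗ[k] ⨁ i, M i :=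
  letI := Classical.decEq ι
  DirectSum.lof k ι M i

/-- A family of submodules of `M` is *internal* (i.e. `M` is their internal direct sum)
when the canonical summation map from the direct sum of the submodules to `M`
is bijective. -/
def SubmodulesInternal (k : Type) [CommRing k] {ι : Type} {M : Type}
    [AddCommGroup M] [Module k M] (p : ι → Submodule k M) : Prop :=
  letI := Classical.decEq ι
  Function.Bijective
    (⇑(DFinsupp.sumAddHom (β := fun i => ↥(p i)) fun i => ((p i).subtype).toAddMonoidHom))

/-! `G`-categories over `k`, free actions, the quotient (orbit) category of a free
`G`-category, and the skew category. -/

/-- An action of a group `G` on a category `C` over `k`: an action on objects together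
with `k`-linear maps on morphism modules, compatible with composition, identities and
the group law. -/
structure GAction (k G : Type) [CommRing k] [Group G] (C : kCat k) where
  smulObj : G → C.Obj → C.Obj
  one_smulObj : ∀ x, smulObj 1 x = x
  mul_smulObj : ∀ s t x, smulObj (s * t) x = smulObj s (smulObj t x)
  smulHom : ∀ (s : G) (x y : C.Obj), C.Hom x y →ₗ[k] C.Hom (smulObj s x) (smulObj s y)
  smulHom_comp : ∀ (s : G) {x y z} (g : C.Hom y z) (f : C.Hom x y),
    smulHom s x z (C.comp g f) = C.comp (smulHom s y z g) (smulHom s x y f)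
  smulHom_id : ∀ (s : G) (x), smulHom s x x (C.id x) = C.id (smulObj s x)
  one_smulHom : ∀ {x y} (f : C.Hom x y), HEq (smulHom 1 x y f) f
  mul_smulHom : ∀ (s t : G) {x y} (f : C.Hom x y),
    HEq (smulHom (s * t) x y f) (smulHom s _ _ (smulHom t x y f))

namespace GAction

variable {k G : Type} [CommRing k] [Group G] {C : kCat k}

/-- The action is free when no nontrivial group element fixes an object. -/
def IsFree (A : GAction k G C) : Prop := ∀ (s : G) (x : C.Obj), A.smulObj s x = x → s = 1

/-- The orbit equivalence relation on objects. -/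
def orbitSetoid (A : GAction k G C) : Setoid C.Obj where
  r x y := ∃ s : G, A.smulObj s x = y
  iseqv := by
    refine ⟨fun x => ⟨1, A.one_smulObj x⟩, ?_, ?_⟩
    · rintro x y ⟨s, h⟩
      exact ⟨s⁻¹, by rw [← h, ← A.mul_smulObj, inv_mul_cancel, A.one_smulObj]⟩
    · rintro x y z ⟨s, h⟩ ⟨t, h'⟩
      exact ⟨t * s, by rw [A.mul_smulObj, h, h']⟩

/-- The set of `G`-orbits of objects. -/
def QuotObj (A : GAction k G C) : Type := Quotient A.orbitSetoid

/-- The orbit of an object. -/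
def orb (A : GAction k G C) (x : C.Obj) : A.QuotObj := Quotient.mk A.orbitSetoid x

theorem orb_smul (A : GAction k G C) (s : G) (x : C.Obj) :
    A.orb (A.smulObj s x) = A.orb x :=
  (Quotient.sound ⟨s, rfl⟩ : A.orb x = A.orb (A.smulObj s x)).symm

/-- The index type of pairs `(x, y)` with `x` in the orbit `α` and `y` in the orbit `β`. -/
def PairIdx (A : GAction k G C) (α β : A.QuotObj) : Type :=
  { x : C.Obj // A.orb x = α } × { y : C.Obj // A.orb y = β }

/-- The direct sum `⊕_{x ∈ α, y ∈ β} Hom_C(x, y)`. -/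
def HomSum (A : GAction k G C) (α β : A.QuotObj) : Type :=
  ⨁ p : A.PairIdx α β, C.Hom p.1.1 p.2.1

noncomputable instance (A : GAction k G C) (α β : A.QuotObj) :
    AddCommGroup (A.HomSum α β) :=
  inferInstanceAs (AddCommGroup (⨁ p : A.PairIdx α β, C.Hom p.1.1 p.2.1))

noncomputable instance (A : GAction k G C) (α β : A.QuotObj) :
    Module k (A.HomSum α β) :=
  inferInstanceAs (Module k (⨁ p : A.PairIdx α β, C.Hom p.1.1 p.2.1))

/-- The element of `HomSum` concentrated in the component indexed by `(x, y)`. -/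
noncomputable def homSumSingle (A : GAction k G C) {α β : A.QuotObj} {x y : C.Obj}
    (hx : A.orb x = α) (hy : A.orb y = β) (f : C.Hom x y) : A.HomSum α β :=
  dsSingle (M := fun p : A.PairIdx α β => C.Hom p.1.1 p.2.1) ⟨⟨x, hx⟩, ⟨y, hy⟩⟩ f

/-- The submodule of `HomSum` spanned by the elements `s • f - f`; quotienting by it
produces the largest quotient on which `G` acts trivially. -/
noncomputable def gSub (A : GAction k G C) (α β : A.QuotObj) :
    Submodule k (A.HomSum α β) :=
  Submodule.span k
    {z | ∃ (s : G) (x y : C.Obj) (hx : A.orb x = α) (hy : A.orb y = β) (f : C.Hom x y),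
      z = A.homSumSingle ((A.orb_smul s x).trans hx) ((A.orb_smul s y).trans hy)
            (A.smulHom s x y f)
          - A.homSumSingle hx hy f}

/-- The morphism module of the quotient category `C/G` from the orbit `α` to the
orbit `β`. -/
def QuotHom (A : GAction k G C) (α β : A.QuotObj) : Type :=
  A.HomSum α β ⧸ A.gSub α β

noncomputable instance (A : GAction k G C) (α β : A.QuotObj) :
    AddCommGroup (A.QuotHom α β) :=
  inferInstanceAs (AddCommGroup (A.HomSum α β ⧸ A.gSub α β))

noncomputable instance (A : GAction k G C) (α β : A.QuotObj) :
    Module k (A.QuotHom α β) :=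
  inferInstanceAs (Module k (A.HomSum α β ⧸ A.gSub α β))

/-- The `k`-linear map sending a morphism `f : x → y` of `C` to its class in the
morphism module of the quotient category. -/
noncomputable def projL (A : GAction k G C) {α β : A.QuotObj} {x y : C.Obj}
    (hx : A.orb x = α) (hy : A.orb y = β) : C.Hom x y →ₗ[k] A.QuotHom α β :=
  (A.gSub α β).mkQ.comp
    (letI := Classical.decEq (A.PairIdx α β)
     DirectSum.lof k (A.PairIdx α β) (fun p => C.Hom p.1.1 p.2.1) ⟨⟨x, hx⟩, ⟨y, hy⟩⟩)

/-- The class of a morphism `f : x → y` of `C` in the quotient category. -/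
noncomputable def proj (A : GAction k G C) {α β : A.QuotObj} {x y : C.Obj}
    (hx : A.orb x = α) (hy : A.orb y = β) (f : C.Hom x y) : A.QuotHom α β :=
  A.projL hx hy f

end GAction

/-- The structure of the quotient category `C/G` of a (free) `G`-category `C` over `k`:
its objects are the `G`-orbits of objects of `C`, its morphism modules are the modules
`QuotHom`, and its composition and identities are induced by those of `C` via the
projection, making it a category over `k`. -/
structure QuotStr {k G : Type} [CommRing k] [Group G] {C : kCat k} (A : GAction k G C) where
  comp : ∀ {α β γ : A.QuotObj}, A.QuotHom β γ → A.QuotHom α β → A.QuotHom α γ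
  id : ∀ α : A.QuotObj, A.QuotHom α α
  id_comp : ∀ {α β} (f : A.QuotHom α β), comp (id β) f = f
  comp_id : ∀ {α β} (f : A.QuotHom α β), comp f (id α) = f
  assoc : ∀ {α β γ δ} (h : A.QuotHom γ δ) (g : A.QuotHom β γ) (f : A.QuotHom α β),
    comp (comp h g) f = comp h (comp g f)
  comp_add_left : ∀ {α β γ} (g g' : A.QuotHom β γ) (f : A.QuotHom α β),
    comp (g + g') f = comp g f + comp g' f
  comp_add_right : ∀ {α β γ} (g : A.QuotHom β γ) (f f' : A.QuotHom α β),
    comp g (f + f') = comp g f + comp g f'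
  comp_smul_left : ∀ {α β γ} (a : k) (g : A.QuotHom β γ) (f : A.QuotHom α β),
    comp (a • g) f = a • comp g f
  comp_smul_right : ∀ {α β γ} (a : k) (g : A.QuotHom β γ) (f : A.QuotHom α β),
    comp g (a • f) = a • comp g f
  comp_proj : ∀ {α β γ} {x y z : C.Obj}
    (hx : A.orb x = α) (hy : A.orb y = β) (hz : A.orb z = γ)
    (g : C.Hom y z) (f : C.Hom x y),
    comp (A.proj hy hz g) (A.proj hx hy f) = A.proj hx hz (C.comp g f)
  id_proj : ∀ {α} {x : C.Obj} (hx : A.orb x = α), id α = A.proj hx hx (C.id x)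

/-- The quotient category `C/G` as a category over `k`. -/
noncomputable def QuotStr.toKCat {k G : Type} [CommRing k] [Group G] {C : kCat k}
    {A : GAction k G C} (Q : QuotStr A) : kCat k where
  Obj := A.QuotObj
  Hom := A.QuotHom
  homAdd := fun _ _ => inferInstance
  homMod := fun _ _ => inferInstance
  id := Q.id
  comp := Q.comp
  id_comp := Q.id_comp
  comp_id := Q.comp_id
  assoc := Q.assoc
  comp_add_left := Q.comp_add_left
  comp_add_right := Q.comp_add_right
  comp_smul_left := Q.comp_smul_left
  comp_smul_right := Q.comp_smul_right


/-! Auxiliary material for the proof. -/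

section CMAux

variable {k G : Type} [CommRing k] [Group G] {C : kCat k}

theorem CM.trans2_refl {x y : C.Obj} (f : C.Hom x y) : C.trans2 rfl rfl f = f := rfl

theorem CM.trans2_congr {x1 y1 x2 y2 x y : C.Obj}
    (h1 : x1 = x) (h2 : y1 = y) (h1' : x2 = x) (h2' : y2 = y)
    {f : C.Hom x1 y1} {g : C.Hom x2 y2} (hfg : HEq f g) :
    C.trans2 h1 h2 f = C.trans2 h1' h2' g := by
  subst h1; subst h2; subst h1'; subst h2'
  exact congrArg _ (eq_of_heq hfg)

/-- `trans2` as a `k`-linear map. -/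
def CM.castL {x x' y y' : C.Obj} (hx : x = x') (hy : y = y') :
    C.Hom x y →ₗ[k] C.Hom x' y' := by subst hx; subst hy; exact LinearMap.id

theorem CM.castL_apply {x x' y y' : C.Obj} (hx : x = x') (hy : y = y')
    (f : C.Hom x y) : CM.castL hx hy f = C.trans2 hx hy f := by
  subst hx; subst hy; rfl

theorem CM.smul_cancel {A : GAction k G C} (hfree : A.IsFree) {s t : G} {x : C.Obj}
    (h : A.smulObj s x = A.smulObj t x) : s = t := by
  have h2 : A.smulObj (t⁻¹ * s) x = x := by
    rw [A.mul_smulObj, h, ← A.mul_smulObj, inv_mul_cancel, A.one_smulObj]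
  exact (inv_mul_eq_one.mp (hfree _ _ h2)).symm

theorem CM.exists_smul (A : GAction k G C) {x y : C.Obj} (h : A.orb x = A.orb y) :
    ∃ s : G, A.smulObj s x = y := Quotient.exact h

/-- The unique `s` with `s • y = xb`. -/
noncomputable def CM.sOf (A : GAction k G C) {β : A.QuotObj} (xb : C.Obj)
    (hb : A.orb xb = β) {y : C.Obj} (hy : A.orb y = β) : G :=
  (CM.exists_smul A (hy.trans hb.symm)).choose

theorem CM.sOf_spec (A : GAction k G C) {β : A.QuotObj} (xb : C.Obj)
    (hb : A.orb xb = β) {y : C.Obj} (hy : A.orb y = β) :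
    A.smulObj (CM.sOf A xb hb hy) y = xb :=
  (CM.exists_smul A (hy.trans hb.symm)).choose_spec

/-- The unique `t` with `t • xa = s • x`. -/
noncomputable def CM.tOf (A : GAction k G C) {α : A.QuotObj} (xa : C.Obj)
    (ha : A.orb xa = α) {x : C.Obj} (hx : A.orb x = α) (s : G) : G :=
  (CM.exists_smul A (ha.trans (((A.orb_smul s x).trans hx).symm))).choose

theorem CM.tOf_spec (A : GAction k G C) {α : A.QuotObj} (xa : C.Obj)
    (ha : A.orb xa = α) {x : C.Obj} (hx : A.orb x = α) (s : G) :
    A.smulObj (CM.tOf A xa ha hx s) xa = A.smulObj s x :=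
  (CM.exists_smul A (ha.trans (((A.orb_smul s x).trans hx).symm))).choose_spec

/-- Component maps of the comparison map `Φ`. -/
noncomputable def CM.compMap (A : GAction k G C) {α β : A.QuotObj}
    (xa xb : C.Obj) (ha : A.orb xa = α) (hb : A.orb xb = β) (p : A.PairIdx α β) :
    C.Hom p.1.1 p.2.1 →ₗ[k] ⨁ s : G, C.Hom (A.smulObj s xa) xb :=
  (dsLof k (fun s : G => C.Hom (A.smulObj s xa) xb)
      (CM.tOf A xa ha p.1.2 (CM.sOf A xb hb p.2.2))).comp
    ((CM.castL (CM.tOf_spec A xa ha p.1.2 (CM.sOf A xb hb p.2.2)).symm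
        (CM.sOf_spec A xb hb p.2.2)).comp
      (A.smulHom (CM.sOf A xb hb p.2.2) p.1.1 p.2.1))

/-- The comparison map `Φ` on the big direct sum. -/
noncomputable def CM.Phi (A : GAction k G C) {α β : A.QuotObj}
    (xa xb : C.Obj) (ha : A.orb xa = α) (hb : A.orb xb = β) :
    A.HomSum α β →ₗ[k] ⨁ s : G, C.Hom (A.smulObj s xa) xb :=
  letI := Classical.decEq (A.PairIdx α β)
  DirectSum.toModule k (A.PairIdx α β) _ (CM.compMap A xa xb ha hb)

theorem CM.Phi_single (A : GAction k G C) {α β : A.QuotObj}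
    (xa xb : C.Obj) (ha : A.orb xa = α) (hb : A.orb xb = β)
    {x y : C.Obj} (hx : A.orb x = α) (hy : A.orb y = β) (f : C.Hom x y) :
    CM.Phi A xa xb ha hb (A.homSumSingle hx hy f) =
      CM.compMap A xa xb ha hb ⟨⟨x, hx⟩, ⟨y, hy⟩⟩ f := by
  letI := Classical.decEq (A.PairIdx α β)
  exact DirectSum.toModule_lof k _ _

theorem CM.compMap_eq (A : GAction k G C) (hfree : A.IsFree) {α β : A.QuotObj}
    (xa xb : C.Obj) (ha : A.orb xa = α) (hb : A.orb xb = β)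
    {x y : C.Obj} (hx : A.orb x = α) (hy : A.orb y = β) (f : C.Hom x y)
    (s t : G) (hs : A.smulObj s y = xb) (ht : A.smulObj t xa = A.smulObj s x) :
    CM.compMap A xa xb ha hb ⟨⟨x, hx⟩, ⟨y, hy⟩⟩ f =
      dsSingle (M := fun u : G => C.Hom (A.smulObj u xa) xb) t
        (C.trans2 ht.symm hs (A.smulHom s x y f)) := by
  obtain rfl : s = CM.sOf A xb hb hy :=
    CM.smul_cancel hfree (by rw [hs, CM.sOf_spec])
  obtain rfl : t = CM.tOf A xa ha hx _ :=
    CM.smul_cancel hfree (by rw [ht, CM.tOf_spec])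
  simp only [CM.compMap, LinearMap.comp_apply, CM.castL_apply]
  rfl

theorem CM.proj_trans2 (A : GAction k G C) {α β : A.QuotObj} {x x' y y' : C.Obj}
    (e1 : x = x') (e2 : y = y')
    (hx : A.orb x = α) (hx' : A.orb x' = α) (hy : A.orb y = β) (hy' : A.orb y' = β)
    (g : C.Hom x y) : A.proj hx' hy' (C.trans2 e1 e2 g) = A.proj hx hy g := by
  subst e1; subst e2; rfl

theorem CM.proj_smul (A : GAction k G C) {α β : A.QuotObj} {x y : C.Obj}
    (hx : A.orb x = α) (hy : A.orb y = β) (s : G)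
    (h1 : A.orb (A.smulObj s x) = α) (h2 : A.orb (A.smulObj s y) = β)
    (f : C.Hom x y) :
    A.proj h1 h2 (A.smulHom s x y f) = A.proj hx hy f := by
  show Submodule.Quotient.mk _ = Submodule.Quotient.mk _
  rw [Submodule.Quotient.eq]
  exact Submodule.subset_span ⟨s, x, y, hx, hy, f, rfl⟩

theorem CM.gSub_le_ker (A : GAction k G C) (hfree : A.IsFree) {α β : A.QuotObj}
    (xa xb : C.Obj) (ha : A.orb xa = α) (hb : A.orb xb = β) :
    A.gSub α β ≤ LinearMap.ker (CM.Phi A xa xb ha hb) := by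
  rw [GAction.gSub, Submodule.span_le]
  rintro z ⟨s, x, y, hx, hy, f, rfl⟩
  simp only [SetLike.mem_coe, LinearMap.mem_ker, map_sub, sub_eq_zero]
  have hs1 : A.smulObj (CM.sOf A xb hb hy * s⁻¹) (A.smulObj s y) = xb := by
    rw [← A.mul_smulObj, inv_mul_cancel_right, CM.sOf_spec]
  have ht1 : A.smulObj (CM.tOf A xa ha hx (CM.sOf A xb hb hy)) xa
      = A.smulObj (CM.sOf A xb hb hy * s⁻¹) (A.smulObj s x) := by
    rw [← A.mul_smulObj, inv_mul_cancel_right, CM.tOf_spec]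
  rw [CM.Phi_single, CM.Phi_single,
    CM.compMap_eq A hfree xa xb ha hb hx hy f (CM.sOf A xb hb hy)
      (CM.tOf A xa ha hx _) (CM.sOf_spec A xb hb hy) (CM.tOf_spec A xa ha hx _),
    CM.compMap_eq A hfree xa xb ha hb _ _ (A.smulHom s x y f)
      (CM.sOf A xb hb hy * s⁻¹) (CM.tOf A xa ha hx (CM.sOf A xb hb hy)) hs1 ht1]
  refine congrArg _ (CM.trans2_congr _ _ _ _ ?_)
  have h := A.mul_smulHom (CM.sOf A xb hb hy * s⁻¹) s f
  rw [inv_mul_cancel_right] at h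
  exact h.symm

/-- The induced map on the quotient. -/
noncomputable def CM.Phibar (A : GAction k G C) (hfree : A.IsFree) {α β : A.QuotObj}
    (xa xb : C.Obj) (ha : A.orb xa = α) (hb : A.orb xb = β) :
    A.QuotHom α β →ₗ[k] ⨁ s : G, C.Hom (A.smulObj s xa) xb :=
  (A.gSub α β).liftQ (CM.Phi A xa xb ha hb) (CM.gSub_le_ker A hfree xa xb ha hb)

theorem CM.Phibar_proj (A : GAction k G C) (hfree : A.IsFree) {α β : A.QuotObj}
    (xa xb : C.Obj) (ha : A.orb xa = α) (hb : A.orb xb = β)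
    {x y : C.Obj} (hx : A.orb x = α) (hy : A.orb y = β) (f : C.Hom x y) :
    CM.Phibar A hfree xa xb ha hb (A.proj hx hy f) =
      CM.compMap A xa xb ha hb ⟨⟨x, hx⟩, ⟨y, hy⟩⟩ f := by
  have h0 : CM.Phibar A hfree xa xb ha hb (A.proj hx hy f)
      = CM.Phi A xa xb ha hb (A.homSumSingle hx hy f) := rfl
  rw [h0, CM.Phi_single]

/-- The inverse map. -/
noncomputable def CM.Psi (A : GAction k G C) {α β : A.QuotObj}
    (xa xb : C.Obj) (ha : A.orb xa = α) (hb : A.orb xb = β) :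
    (⨁ s : G, C.Hom (A.smulObj s xa) xb) →ₗ[k] A.QuotHom α β :=
  letI := Classical.decEq G
  DirectSum.toModule k G _ (fun s => A.projL ((A.orb_smul s xa).trans ha) hb)

theorem CM.comp1 (A : GAction k G C) (hfree : A.IsFree) {α β : A.QuotObj}
    (xa xb : C.Obj) (ha : A.orb xa = α) (hb : A.orb xb = β) :
    (CM.Phibar A hfree xa xb ha hb).comp (CM.Psi A xa xb ha hb) = LinearMap.id := by
  letI := Classical.decEq G
  refine DirectSum.linearMap_ext k fun s => ?_
  ext f
  simp only [LinearMap.comp_apply, LinearMap.id_apply]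
  have h1 : CM.Psi A xa xb ha hb (DirectSum.lof k G _ s f)
      = A.proj ((A.orb_smul s xa).trans ha) hb f := DirectSum.toModule_lof k _ _
  rw [h1, CM.Phibar_proj,
    CM.compMap_eq A hfree xa xb ha hb _ _ f 1 s (A.one_smulObj xb)
      (A.one_smulObj (A.smulObj s xa)).symm]
  have h2 : C.trans2 (A.one_smulObj (A.smulObj s xa)).symm.symm (A.one_smulObj xb)
      (A.smulHom 1 (A.smulObj s xa) xb f) = f :=
    (CM.trans2_congr _ _ rfl rfl (A.one_smulHom f)).trans (CM.trans2_refl f)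
  rw [h2]
  rfl

theorem CM.comp2 (A : GAction k G C) (hfree : A.IsFree) {α β : A.QuotObj}
    (xa xb : C.Obj) (ha : A.orb xa = α) (hb : A.orb xb = β) :
    (CM.Psi A xa xb ha hb).comp (CM.Phibar A hfree xa xb ha hb) = LinearMap.id := by
  letI := Classical.decEq (A.PairIdx α β)
  letI := Classical.decEq G
  apply Submodule.linearMap_qext
  refine DirectSum.linearMap_ext k fun p => ?_
  ext f
  obtain ⟨⟨x, hx⟩, ⟨y, hy⟩⟩ := p
  simp only [LinearMap.comp_apply, Submodule.mkQ_apply, LinearMap.id_apply]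
  show CM.Psi A xa xb ha hb (CM.Phibar A hfree xa xb ha hb (A.proj hx hy f))
      = A.proj hx hy f
  rw [CM.Phibar_proj,
    CM.compMap_eq A hfree xa xb ha hb hx hy f (CM.sOf A xb hb hy)
      (CM.tOf A xa ha hx _) (CM.sOf_spec A xb hb hy) (CM.tOf_spec A xa ha hx _)]
  have h1 : CM.Psi A xa xb ha hb
      (dsSingle (M := fun u : G => C.Hom (A.smulObj u xa) xb)
        (CM.tOf A xa ha hx (CM.sOf A xb hb hy))
        (C.trans2 (CM.tOf_spec A xa ha hx (CM.sOf A xb hb hy)).symm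
          (CM.sOf_spec A xb hb hy)
          (A.smulHom (CM.sOf A xb hb hy) x y f)))
      = A.proj ((A.orb_smul _ xa).trans ha) hb
        (C.trans2 (CM.tOf_spec A xa ha hx (CM.sOf A xb hb hy)).symm
          (CM.sOf_spec A xb hb hy)
          (A.smulHom (CM.sOf A xb hb hy) x y f)) := DirectSum.toModule_lof k _ _
  rw [h1,
    CM.proj_trans2 A _ _ ((A.orb_smul _ x).trans hx) _ ((A.orb_smul _ y).trans hy) _ _,
    CM.proj_smul A hx hy _ _ _ f]

end CMAux

/-- **Lemma (Cibils–Marcos).** Let `C` be a free `G`-category over `k`, let `α, β` be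
orbits of objects with chosen representatives `x_α ∈ α` and `x_β ∈ β`. Then the
morphism module `Hom_{C/G}(α, β)` of the quotient category is canonically isomorphic
as a `k`-module to `⊕_{s ∈ G} Hom_C(s·x_α, x_β)`; the isomorphism sends the class of
`f : x → y` (`x ∈ α`, `y ∈ β`) to `s·f` placed in the appropriate component, where `s`
is the (unique) group element with `s·y = x_β`. -/
theorem quotHom_linearEquiv_directSum (k G : Type) [CommRing k] [Group G]
    (C : kCat k) (A : GAction k G C) (hfree : A.IsFree)
    (α β : A.QuotObj) (xa xb : C.Obj) (ha : A.orb xa = α) (hb : A.orb xb = β) :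
    ∃ φ : A.QuotHom α β ≃ₗ[k] ⨁ s : G, C.Hom (A.smulObj s xa) xb,
      ∀ (x y : C.Obj) (hx : A.orb x = α) (hy : A.orb y = β) (f : C.Hom x y)
        (s t : G) (hs : A.smulObj s y = xb) (ht : A.smulObj t xa = A.smulObj s x),
        φ (A.proj hx hy f) =
          dsSingle (M := fun u : G => C.Hom (A.smulObj u xa) xb) t
            (C.trans2 ht.symm hs (A.smulHom s x y f)) := by
  refine ⟨LinearEquiv.ofLinear (CM.Phibar A hfree xa xb ha hb) (CM.Psi A xa xb ha hb)
    (CM.comp1 A hfree xa xb ha hb) (CM.comp2 A hfree xa xb ha hb), ?_⟩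
  intro x y hx hy f s t hs ht
  rw [LinearEquiv.ofLinear_apply, CM.Phibar_proj,
    CM.compMap_eq A hfree xa xb ha hb hx hy f s t hs ht]
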